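/- Let d ≥ 1 and let f : ℝ^d → ℝ be differentiable with gradient ∇f Lipschitz with constant σ_B ≥ 0. Let θ ∈ ℝ^d, v ∈ ℝ^d with v ≠ 0, η > 0, and set θ' = θ + η · v/‖v‖. Then ‖∇f(θ)‖ ≤ 8‖v − ∇f(θ)‖ + (3σ_B η)/2 + (3/η)(f(θ') − f(θ)). -/

import Mathlib

open InnerProductSpace

/-- Descent lemma: for `f` with `σB`-Lipschitz gradient,
`f (θ + u) - f θ ≥ ⟪∇f θ, u⟫ - σB/2 ‖u‖²`. -/
lemma sharp_descent {d : ℕ}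
    (f : EuclideanSpace ℝ (Fin d) → ℝ) (σB : ℝ) (hσB : 0 ≤ σB)
    (hdiff : Differentiable ℝ f)
    (hlip : ∀ x y : EuclideanSpace ℝ (Fin d),
      ‖gradient f x - gradient f y‖ ≤ σB * ‖x - y‖)
    (θ u : EuclideanSpace ℝ (Fin d)) :
    (inner ℝ (gradient f θ) u : ℝ) - σB / 2 * ‖u‖ ^ 2 ≤ f (θ + u) - f θ := by
  set h : ℝ → ℝ := fun t =>
    f (θ + t • u) - t * (inner ℝ (gradient f θ) u : ℝ) + t ^ 2 * (σB * ‖u‖ ^ 2) / 2 with hh_def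
  have hc : ∀ t : ℝ, HasDerivAt (fun s : ℝ => θ + s • u) u t := by
    intro t
    simpa using (((hasDerivAt_id t).smul_const u).const_add θ)
  have hψ : ∀ t : ℝ, HasDerivAt (fun s : ℝ => f (θ + s • u))
      (inner ℝ (gradient f (θ + t • u)) u : ℝ) t := by
    intro t
    have := ((hdiff (θ + t • u)).hasGradientAt.hasFDerivAt).comp_hasDerivAt t (hc t)
    simpa [Function.comp_def] using this
  have hh : ∀ t : ℝ, HasDerivAt h
      ((inner ℝ (gradient f (θ + t • u)) u : ℝ) - (inner ℝ (gradient f θ) u : ℝ)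
        + t * (σB * ‖u‖ ^ 2)) t := by
    intro t
    have h1 : HasDerivAt (fun s : ℝ => s * (inner ℝ (gradient f θ) u : ℝ))
        (inner ℝ (gradient f θ) u : ℝ) t := by
      simpa using (hasDerivAt_id t).mul_const (inner ℝ (gradient f θ) u : ℝ)
    have h2 : HasDerivAt (fun s : ℝ => s ^ 2 * (σB * ‖u‖ ^ 2) / 2)
        (t * (σB * ‖u‖ ^ 2)) t := by
      have := ((hasDerivAt_pow 2 t).mul_const (σB * ‖u‖ ^ 2)).div_const 2
      exact this.congr_deriv (by push_cast; ring)
    exact ((hψ t).sub h1).add h2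
  have hmono : MonotoneOn h (Set.Icc (0 : ℝ) 1) := by
    apply monotoneOn_of_deriv_nonneg (convex_Icc 0 1)
    · exact fun t _ => ((hh t).differentiableAt.continuousAt).continuousWithinAt
    · exact fun t _ => ((hh t).differentiableAt).differentiableWithinAt
    · intro t ht
      rw [interior_Icc] at ht
      rw [(hh t).deriv]
      have hcs : |(inner ℝ (gradient f θ - gradient f (θ + t • u)) u : ℝ)|
          ≤ ‖gradient f θ - gradient f (θ + t • u)‖ * ‖u‖ := abs_real_inner_le_norm _ _
      have hl : ‖gradient f θ - gradient f (θ + t • u)‖ ≤ σB * (t * ‖u‖) := by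
        have := hlip θ (θ + t • u)
        have he : ‖θ - (θ + t • u)‖ = t * ‖u‖ := by
          rw [show θ - (θ + t • u) = -(t • u) by abel]
          rw [norm_neg, norm_smul, Real.norm_eq_abs, abs_of_pos ht.1]
        rwa [he] at this
      have hkey : (inner ℝ (gradient f θ - gradient f (θ + t • u)) u : ℝ)
          ≤ σB * (t * ‖u‖) * ‖u‖ :=
        le_trans (le_abs_self _) (le_trans hcs
          (mul_le_mul_of_nonneg_right hl (norm_nonneg u)))
      rw [inner_sub_left] at hkey
      nlinarith [hkey]
  have h01 := hmono (Set.mem_Icc.2 ⟨le_refl 0, zero_le_one⟩)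
    (Set.mem_Icc.2 ⟨zero_le_one, le_refl 1⟩) zero_le_one
  simp only [hh_def, zero_smul, add_zero, zero_mul, one_smul, one_mul, one_pow,
    sub_zero, zero_pow, zero_div] at h01
  linarith [h01]

/-- Supplemental Lemma of the paper, at one normalized ascent step. -/
theorem sharp_supplemental_lemma {d : ℕ} (hd : 1 ≤ d)
    (f : EuclideanSpace ℝ (Fin d) → ℝ) (σB : ℝ) (hσB : 0 ≤ σB)
    (hdiff : Differentiable ℝ f)
    (hlip : ∀ x y : EuclideanSpace ℝ (Fin d),
      ‖gradient f x - gradient f y‖ ≤ σB * ‖x - y‖)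
    (θ v : EuclideanSpace ℝ (Fin d)) (hv : v ≠ 0) (η : ℝ) (hη : 0 < η)
    (θ' : EuclideanSpace ℝ (Fin d)) (hθ' : θ' = θ + η • (‖v‖⁻¹ • v)) :
    ‖gradient f θ‖ ≤ 8 * ‖v - gradient f θ‖ + 3 * σB * η / 2
      + (3 / η) * (f θ' - f θ) := by
  set g := gradient f θ with hg
  set u : EuclideanSpace ℝ (Fin d) := η • (‖v‖⁻¹ • v) with hu
  have hvn : (0 : ℝ) < ‖v‖ := norm_pos_iff.2 hv
  have hnu : ‖u‖ = η := by
    rw [hu, norm_smul, norm_smul, norm_inv, norm_norm, Real.norm_eq_abs,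
      abs_of_pos hη, inv_mul_cancel₀ (ne_of_gt hvn), mul_one]
  have hdesc := sharp_descent f σB hσB hdiff hlip θ u
  rw [← hθ', hnu] at hdesc
  -- ⟪g, u⟫ ≥ η‖v‖ - η‖v - g‖
  have hinner : η * ‖v‖ - η * ‖v - g‖ ≤ (inner ℝ g u : ℝ) := by
    have h1 : (inner ℝ v u : ℝ) = η * ‖v‖ := by
      rw [hu, real_inner_smul_right, real_inner_smul_right,
        real_inner_self_eq_norm_sq]
      field_simp
    have h2 : (inner ℝ (v - g) u : ℝ) ≤ η * ‖v - g‖ := by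
      calc (inner ℝ (v - g) u : ℝ) ≤ ‖v - g‖ * ‖u‖ := real_inner_le_norm _ _
        _ = η * ‖v - g‖ := by rw [hnu]; ring
    have h3 : (inner ℝ g u : ℝ) = (inner ℝ v u : ℝ) - (inner ℝ (v - g) u : ℝ) := by
      rw [inner_sub_left]; ring
    rw [h3, h1]; linarith
  have hng : ‖g‖ ≤ ‖v‖ + ‖v - g‖ := by
    calc ‖g‖ = ‖v - (v - g)‖ := by rw [sub_sub_cancel]
      _ ≤ ‖v‖ + ‖v - g‖ := norm_sub_le _ _
  -- from descent: f θ' - f θ ≥ η‖v‖ - η‖v-g‖ - σB η²/2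
  have hΔ : η * ‖v‖ - η * ‖v - g‖ - σB / 2 * η ^ 2 ≤ f θ' - f θ := by
    linarith
  have h3η : 3 * ‖v‖ - 3 * ‖v - g‖ - 3 * σB * η / 2 ≤ (3 / η) * (f θ' - f θ) := by
    have := mul_le_mul_of_nonneg_left hΔ (by positivity : (0:ℝ) ≤ 3 / η)
    calc 3 * ‖v‖ - 3 * ‖v - g‖ - 3 * σB * η / 2
        = (3 / η) * (η * ‖v‖ - η * ‖v - g‖ - σB / 2 * η ^ 2) := by
          field_simp
      _ ≤ (3 / η) * (f θ' - f θ) := this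
  have hvpos : (0:ℝ) ≤ ‖v‖ := norm_nonneg v
  have hεpos : (0:ℝ) ≤ ‖v - g‖ := norm_nonneg _
  linarith
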